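/- Let (X,d) be a metric space, let S ⊆ X be a finite server set with |S| = k, and let c_1,…,c_k ∈ X be a sequence of clients. Then there exists a sequence of matchings f_1,…,f_k, where each f_t : {1,…,t} → S is an optimal (minimum-cost) matching of the first t clients into S, such that the images are nested: range(f_1) ⊆ range(f_2) ⊆ … ⊆ range(f_k). -/
import Mathlib


/-- A matching of the first `t` clients (indexed `1,…,t`) into the server set `S`:
an injective assignment whose values on `{1,…,t}` are servers in `S`. -/
def IsMatching {X : Type*} [MetricSpace X] (S : Finset X) (t : ℕ) (f : ℕ → X) : Prop :=
  Set.InjOn f (Set.Icc 1 t) ∧ ∀ j ∈ Set.Icc 1 t, f j ∈ S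

/-- The cost of a matching `f` of the first `t` clients `c 1, …, c t`. -/
noncomputable def matchingCost {X : Type*} [MetricSpace X] (t : ℕ) (c f : ℕ → X) : ℝ :=
  ∑ j ∈ Finset.Icc 1 t, dist (c j) (f j)

/-- `OPT S t c` is the minimum cost of a matching of the first `t` clients into `S`. -/
noncomputable def OPT {X : Type*} [MetricSpace X] (S : Finset X) (t : ℕ) (c : ℕ → X) : ℝ :=
  sInf {r : ℝ | ∃ f : ℕ → X, IsMatching S t f ∧ matchingCost t c f = r}

section Aux
variable {X : Type*} [MetricSpace X] (S : Finset X) (c : ℕ → X)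


lemma OPT_le {t : ℕ} {f : ℕ → X} (hf : IsMatching S t f) :
    OPT S t c ≤ matchingCost t c f := by
  apply csInf_le
  · refine ⟨0, ?_⟩
    rintro r ⟨f', -, rfl⟩
    exact Finset.sum_nonneg fun j _ => dist_nonneg
  · exact ⟨f, hf, rfl⟩

lemma exists_optimal {t : ℕ} (ht : t ≤ S.card) :
    ∃ f : ℕ → X, IsMatching S t f ∧ matchingCost t c f = OPT S t c := by
  classical
  set A := {r : ℝ | ∃ f : ℕ → X, IsMatching S t f ∧ matchingCost t c f = r} with hA
  have hne : A.Nonempty := by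
    obtain ⟨T, hTS, hTcard⟩ := Finset.exists_subset_card_eq ht
    have hcard : (Finset.Icc 1 t).card = T.card := by simp [Nat.card_Icc, hTcard]
    let e := Finset.equivOfCardEq hcard
    refine ⟨_, ⟨fun j => if hj : j ∈ Finset.Icc 1 t then (e ⟨j, hj⟩ : X) else c 0, ⟨?_, ?_⟩, rfl⟩⟩
    · intro a ha b hb hab
      have ha' : a ∈ Finset.Icc 1 t := by simpa [Finset.mem_Icc] using ha
      have hb' : b ∈ Finset.Icc 1 t := by simpa [Finset.mem_Icc] using hb
      simp only [dif_pos ha', dif_pos hb'] at hab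
      have := e.injective (Subtype.coe_injective hab)
      simpa using congrArg Subtype.val this
    · intro j hj
      have hj' : j ∈ Finset.Icc 1 t := by simpa [Finset.mem_Icc] using hj
      simp only [dif_pos hj']
      exact hTS (e ⟨j, hj'⟩).2
  have hfin : A.Finite := by
    have hsub : A ⊆ (fun gv : (Finset.Icc 1 t : Finset ℕ) → X =>
        ∑ j ∈ (Finset.Icc 1 t).attach, dist (c j.1) (gv j)) ''
        (Set.univ.pi fun _ => (S : Set X)) := by
      rintro r ⟨f, hf, rfl⟩
      refine ⟨fun j => f j.1, fun j _ => hf.2 j.1 (Set.mem_Icc.mpr (Finset.mem_Icc.mp j.2)), ?_⟩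
      simp only [matchingCost]
      exact Finset.sum_attach (Finset.Icc 1 t) (fun j => dist (c j) (f j))
    exact Set.Finite.subset (Set.Finite.image _ (Set.Finite.pi fun _ => S.finite_toSet)) hsub
  have hmem : sInf A ∈ A := hne.csInf_mem hfin
  obtain ⟨f, hf, hc⟩ := hmem
  exact ⟨f, hf, hc⟩

lemma exchange {t : ℕ} (ht : t + 1 ≤ S.card)
    {g : ℕ → X} (hg : IsMatching S t g) (hgopt : matchingCost t c g = OPT S t c) :
    ∃ h : ℕ → X, (IsMatching S (t+1) h ∧ matchingCost (t+1) c h = OPT S (t+1) c) ∧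
      g '' Set.Icc 1 t ⊆ h '' Set.Icc 1 (t+1) := by
  classical
  set Ig : Finset X := (Finset.Icc 1 t).image g with hIg
  set μ : (ℕ → X) → ℕ := fun h => (Ig ∩ (Finset.Icc 1 (t+1)).image h).card with hμ
  set Pred : (ℕ → X) → Prop := fun h =>
    IsMatching S (t+1) h ∧ matchingCost (t+1) c h = OPT S (t+1) c with hPred
  have hPne : ∃ h, Pred h := exists_optimal S c ht
  set N : Set ℕ := {n | ∃ h, Pred h ∧ μ h = n} with hN
  have hNne : N.Nonempty := ⟨μ hPne.choose, hPne.choose, hPne.choose_spec, rfl⟩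
  have hNbdd : BddAbove N := by
    refine ⟨t, ?_⟩
    rintro n ⟨h, -, rfl⟩
    calc μ h ≤ Ig.card := Finset.card_le_card Finset.inter_subset_left
      _ ≤ (Finset.Icc 1 t).card := Finset.card_image_le
      _ = t := by simp
  have hmem := Nat.sSup_mem hNne hNbdd
  rw [hN] at hmem
  obtain ⟨h, hPh, hμh⟩ := hmem
  have hmax : ∀ h', Pred h' → μ h' ≤ μ h := fun h' hh' => by
    rw [hμh]; exact le_csSup hNbdd ⟨h', hh', rfl⟩
  have hh : IsMatching S (t+1) h := hPh.1
  refine ⟨h, hPh, ?_⟩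
  by_contra hsub
  obtain ⟨s, hsg, hsh⟩ := Set.not_subset.mp hsub
  obtain ⟨j0, hj0, rfl⟩ := hsg
  have hIccsub : Set.Icc 1 t ⊆ Set.Icc (1:ℕ) (t+1) := Set.Icc_subset_Icc_right (by omega)
  -- the alternating path
  set P : ℕ → ℕ := fun i => Nat.rec j0
    (fun _ p => if hp : ∃ x ∈ Set.Icc 1 t, g x = h p then hp.choose else p) i with hPdef
  have hP0 : P 0 = j0 := rfl
  have hPstep : ∀ i, P (i+1) =
      if hp : ∃ x ∈ Set.Icc 1 t, g x = h (P i) then hp.choose else P i := fun i => rfl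
  have hK1 : ∀ i, P i ∈ Set.Icc 1 t := by
    intro i
    induction i with
    | zero => exact hj0
    | succ i ih =>
      rw [hPstep]
      split
      · next hp => exact hp.choose_spec.1
      · exact ih
  have hstep' : ∀ i, (∃ x ∈ Set.Icc 1 t, g x = h (P i)) → g (P (i+1)) = h (P i) := by
    intro i hp
    rw [hPstep, dif_pos hp]
    exact hp.choose_spec.2
  have hterm : ∃ i, ¬ ∃ x ∈ Set.Icc 1 t, g x = h (P i) := by
    by_contra hc
    push_neg at hc
    have hchain : ∀ i, g (P (i+1)) = h (P i) := fun i => hstep' i (hc i)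
    have hinj : ∀ i, ∀ l < i, P l ≠ P i := by
      intro i
      induction i using Nat.strong_induction_on with
      | _ i ih =>
        intro l hl heq
        obtain ⟨i', rfl⟩ : ∃ i', i = i' + 1 := ⟨i - 1, by omega⟩
        match l with
        | 0 =>
          refine hsh ⟨P i', hIccsub (hK1 i'), ?_⟩
          rw [← hchain i', ← heq, hP0]
        | Nat.succ l' =>
          have hhh : h (P l') = h (P i') := by
            rw [← hchain l', ← hchain i', heq]
          have hpl : P l' = P i' := hh.1 (hIccsub (hK1 l')) (hIccsub (hK1 i')) hhh
          exact ih i' (by omega) l' (by omega) hpl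
    have hinjOn : Set.InjOn P ↑(Finset.range (t+2)) := by
      intro a _ b _ hab
      rcases Nat.lt_trichotomy a b with hlt | he | hlt
      · exact absurd hab (hinj b a hlt)
      · exact he
      · exact absurd hab.symm (hinj a b hlt)
    have hsubT : (Finset.range (t+2)).image P ⊆ Finset.Icc 1 t := by
      intro x hx
      obtain ⟨i, -, rfl⟩ := Finset.mem_image.mp hx
      exact Finset.mem_Icc.mpr (Set.mem_Icc.mp (hK1 i))
    have hle := Finset.card_le_card hsubT
    rw [Finset.card_image_of_injOn hinjOn] at hle
    simp at hle
  set m : ℕ := Nat.find hterm with hm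
  have hTm : ¬ ∃ x ∈ Set.Icc 1 t, g x = h (P m) := Nat.find_spec hterm
  have hK2 : ∀ i < m, g (P (i+1)) = h (P i) := fun i hi =>
    hstep' i (of_not_not (Nat.find_min hterm hi))
  set D : Set ℕ := {j | ∃ i ≤ m, P i = j} with hD
  have hj0D : j0 ∈ D := ⟨0, Nat.zero_le m, hP0⟩
  have hDsub : ∀ j ∈ D, j ∈ Set.Icc 1 t := by
    rintro j ⟨i, -, rfl⟩
    exact hK1 i
  set h' : ℕ → X := fun j => if j ∈ D then g j else h j with hh'
  set g' : ℕ → X := fun j => if j ∈ D then h j else g j with hg'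
  have hh'eq : ∀ j ∈ D, h' j = g j := fun j hj => if_pos hj
  have hh'eq' : ∀ j, j ∉ D → h' j = h j := fun j hj => if_neg hj
  have hg'eq : ∀ j ∈ D, g' j = h j := fun j hj => if_pos hj
  have hg'eq' : ∀ j, j ∉ D → g' j = g j := fun j hj => if_neg hj
  -- h' is a matching of the first t+1 clients
  have hh'M : IsMatching S (t+1) h' := by
    constructor
    · intro a ha b hb hab
      by_cases haD : a ∈ D <;> by_cases hbD : b ∈ D
      · rw [hh'eq a haD, hh'eq b hbD] at hab
        exact hg.1 (hDsub a haD) (hDsub b hbD) hab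
      · rw [hh'eq a haD, hh'eq' b hbD] at hab
        obtain ⟨i, him, rfl⟩ := haD
        exfalso
        match i with
        | 0 =>
          rw [hP0] at hab
          exact hsh ⟨b, hb, hab.symm⟩
        | Nat.succ i =>
          rw [hK2 i (by omega)] at hab
          exact hbD ⟨i, by omega, hh.1 (hIccsub (hK1 i)) hb hab⟩
      · rw [hh'eq' a haD, hh'eq b hbD] at hab
        obtain ⟨i, him, rfl⟩ := hbD
        exfalso
        match i with
        | 0 =>
          rw [hP0] at hab
          exact hsh ⟨a, ha, hab⟩
        | Nat.succ i =>
          rw [hK2 i (by omega)] at hab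
          exact haD ⟨i, by omega, hh.1 (hIccsub (hK1 i)) ha hab.symm⟩
      · rw [hh'eq' a haD, hh'eq' b hbD] at hab
        exact hh.1 ha hb hab
    · intro j hj
      by_cases hjD : j ∈ D
      · rw [hh'eq j hjD]; exact hg.2 j (hDsub j hjD)
      · rw [hh'eq' j hjD]; exact hh.2 j hj
  -- g' is a matching of the first t clients
  have hg'M : IsMatching S t g' := by
    constructor
    · intro a ha b hb hab
      by_cases haD : a ∈ D <;> by_cases hbD : b ∈ D
      · rw [hg'eq a haD, hg'eq b hbD] at hab
        exact hh.1 (hIccsub ha) (hIccsub hb) hab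
      · rw [hg'eq a haD, hg'eq' b hbD] at hab
        obtain ⟨i, him, rfl⟩ := haD
        exfalso
        rcases Nat.lt_or_ge i m with him' | him'
        · rw [← hK2 i him'] at hab
          have := hg.1 (hK1 (i+1)) hb hab
          exact hbD ⟨i+1, by omega, this⟩
        · have : i = m := by omega
          subst this
          exact hTm ⟨b, hb, hab.symm⟩
      · rw [hg'eq' a haD, hg'eq b hbD] at hab
        obtain ⟨i, him, rfl⟩ := hbD
        exfalso
        rcases Nat.lt_or_ge i m with him' | him'
        · rw [← hK2 i him'] at hab
          have := hg.1 (hK1 (i+1)) ha hab.symm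
          exact haD ⟨i+1, by omega, this⟩
        · have : i = m := by omega
          subst this
          exact hTm ⟨a, ha, hab⟩
      · rw [hg'eq' a haD, hg'eq' b hbD] at hab
        exact hg.1 ha hb hab
    · intro j hj
      by_cases hjD : j ∈ D
      · rw [hg'eq j hjD]; exact hh.2 j (hIccsub hj)
      · rw [hg'eq' j hjD]; exact hg.2 j hj
  -- cost comparison
  set DF : Finset ℕ := (Finset.range (m+1)).image P with hDF
  have hDFD : ∀ j, j ∈ DF ↔ j ∈ D := by
    intro j
    simp only [hDF, Finset.mem_image, Finset.mem_range, hD, Set.mem_setOf_eq,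
      Nat.lt_succ_iff]
  have hDFsub : DF ⊆ Finset.Icc 1 t := by
    intro x hx
    exact Finset.mem_Icc.mpr (Set.mem_Icc.mp (hDsub x ((hDFD x).mp hx)))
  have hDFsub' : DF ⊆ Finset.Icc 1 (t+1) := by
    intro x hx
    have := Finset.mem_Icc.mp (hDFsub hx)
    exact Finset.mem_Icc.mpr ⟨this.1, by omega⟩
  have hsplit : ∀ (u : ℕ → X) (T : Finset ℕ), DF ⊆ T →
      ∑ j ∈ T, dist (c j) (u j)
        = ∑ j ∈ T \ DF, dist (c j) (u j) + ∑ j ∈ DF, dist (c j) (u j) :=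
    fun u T hT => (Finset.sum_sdiff hT).symm
  have hcongr1 : ∀ u u' : ℕ → X, (∀ j ∈ D, u j = u' j) →
      ∑ j ∈ DF, dist (c j) (u j) = ∑ j ∈ DF, dist (c j) (u' j) :=
    fun u u' he => Finset.sum_congr rfl fun j hj => by rw [he j ((hDFD j).mp hj)]
  have hcongr2 : ∀ (u u' : ℕ → X) (T : Finset ℕ), (∀ j, j ∉ D → u j = u' j) →
      ∑ j ∈ T \ DF, dist (c j) (u j) = ∑ j ∈ T \ DF, dist (c j) (u' j) :=
    fun u u' T he => Finset.sum_congr rfl fun j hj => by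
      rw [he j (fun hjD => (Finset.mem_sdiff.mp hj).2 ((hDFD j).mpr hjD))]
  have hkey : ∑ j ∈ DF, dist (c j) (g j) ≤ ∑ j ∈ DF, dist (c j) (h j) := by
    have h1 : matchingCost t c g ≤ matchingCost t c g' := by
      rw [hgopt]; exact OPT_le S c hg'M
    have e1 : matchingCost t c g
        = ∑ j ∈ Finset.Icc 1 t \ DF, dist (c j) (g j) + ∑ j ∈ DF, dist (c j) (g j) :=
      hsplit g _ hDFsub
    have e2 : matchingCost t c g'
        = ∑ j ∈ Finset.Icc 1 t \ DF, dist (c j) (g j) + ∑ j ∈ DF, dist (c j) (h j) := by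
      rw [matchingCost, hsplit g' _ hDFsub, hcongr1 g' h hg'eq, hcongr2 g' g _ hg'eq']
    rw [e1, e2] at h1
    linarith
  have hopt' : matchingCost (t+1) c h' = OPT S (t+1) c := by
    have e1 : matchingCost (t+1) c h'
        = ∑ j ∈ Finset.Icc 1 (t+1) \ DF, dist (c j) (h j) + ∑ j ∈ DF, dist (c j) (g j) := by
      rw [matchingCost, hsplit h' _ hDFsub', hcongr1 h' g hh'eq, hcongr2 h' h _ hh'eq']
    have e2 : matchingCost (t+1) c h
        = ∑ j ∈ Finset.Icc 1 (t+1) \ DF, dist (c j) (h j) + ∑ j ∈ DF, dist (c j) (h j) :=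
      hsplit h _ hDFsub'
    have hle : matchingCost (t+1) c h' ≤ OPT S (t+1) c := by
      rw [← hPh.2, e1, e2]; linarith
    exact le_antisymm hle (OPT_le S c hh'M)
  -- the intersection grows
  have himg : Ig ∩ (Finset.Icc 1 (t+1)).image h'
      = insert (g j0) (Ig ∩ (Finset.Icc 1 (t+1)).image h) := by
    ext x
    simp only [Finset.mem_inter, Finset.mem_insert, Finset.mem_image]
    constructor
    · rintro ⟨hxg, j, hj, rfl⟩
      by_cases hjD : j ∈ D
      · obtain ⟨i, him, rfl⟩ := hjD
        match i with
        | 0 =>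
          left
          rw [hh'eq _ ⟨0, Nat.zero_le m, rfl⟩, hP0]
        | Nat.succ i =>
          right
          refine ⟨hxg, P i, ?_, ?_⟩
          · exact Finset.mem_Icc.mpr ⟨(hK1 i).1, by have := (hK1 i).2; omega⟩
          · rw [hh'eq _ ⟨i+1, him, rfl⟩, hK2 i (by omega)]
      · right
        exact ⟨hxg, j, hj, (hh'eq' j hjD).symm⟩
    · rintro (rfl | ⟨hxg, j, hj, rfl⟩)
      · have hj0F : j0 ∈ Finset.Icc 1 (t+1) :=
          Finset.mem_Icc.mpr ⟨hj0.1, by have := hj0.2; omega⟩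
        refine ⟨Finset.mem_image.mpr ⟨j0, Finset.mem_Icc.mpr (Set.mem_Icc.mp hj0), rfl⟩,
          j0, hj0F, hh'eq j0 hj0D⟩
      · refine ⟨hxg, ?_⟩
        by_cases hex : ∃ i < m, P i = j
        · obtain ⟨i, him, rfl⟩ := hex
          refine ⟨P (i+1), ?_, ?_⟩
          · have := hK1 (i+1)
            exact Finset.mem_Icc.mpr ⟨this.1, by have := this.2; omega⟩
          · rw [hh'eq _ ⟨i+1, by omega, rfl⟩, hK2 i him]
        · by_cases hjD : j ∈ D
          · obtain ⟨i, him, rfl⟩ := hjD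
            have : i = m := by
              by_contra hne
              exact hex ⟨i, by omega, rfl⟩
            subst this
            exfalso
            obtain ⟨b, hbmem, hbx⟩ := Finset.mem_image.mp hxg
            exact hTm ⟨b, Set.mem_Icc.mpr (Finset.mem_Icc.mp hbmem), hbx⟩
          · exact ⟨j, hj, hh'eq' j hjD⟩
  have hsnot : g j0 ∉ Ig ∩ (Finset.Icc 1 (t+1)).image h := by
    intro hmem
    obtain ⟨j, hjmem, hjx⟩ := Finset.mem_image.mp (Finset.mem_inter.mp hmem).2
    exact hsh ⟨j, Set.mem_Icc.mpr (Finset.mem_Icc.mp hjmem), hjx⟩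
  have hμ' : μ h' = μ h + 1 := by
    rw [hμ]
    dsimp only
    rw [himg, Finset.card_insert_of_notMem hsnot]
  have := hmax h' ⟨hh'M, hopt'⟩
  omega

theorem stmt4' :
    ∃ f : ℕ → (ℕ → X),
      (∀ t, 1 ≤ t → t ≤ S.card →
        IsMatching S t (f t) ∧ matchingCost t c (f t) = OPT S t c) ∧
      (∀ t, 1 ≤ t → t < S.card →
        f t '' Set.Icc 1 t ⊆ f (t + 1) '' Set.Icc 1 (t + 1)) := by
  have key : ∀ n : ℕ, ∃ f : ℕ → (ℕ → X),
      (∀ u, 1 ≤ u → u ≤ n → u ≤ S.card →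
        IsMatching S u (f u) ∧ matchingCost u c (f u) = OPT S u c) ∧
      (∀ u, 1 ≤ u → u < n → u < S.card →
        f u '' Set.Icc 1 u ⊆ f (u+1) '' Set.Icc 1 (u+1)) := by
    intro n
    induction n with
    | zero =>
      exact ⟨fun _ _ => c 0, fun u hu hun _ => absurd hun (by omega),
        fun u hu hun _ => absurd hun (by omega)⟩
    | succ n ih =>
      obtain ⟨f, hf1, hf2⟩ := ih
      by_cases hcard : n + 1 ≤ S.card
      · rcases Nat.eq_zero_or_pos n with hn0 | hn1
        · subst hn0
          obtain ⟨h1, hm, ho⟩ := exists_optimal S c hcard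
          refine ⟨fun _ => h1, ?_, ?_⟩
          · intro u hu hun _
            have : u = 1 := by omega
            subst this
            exact ⟨hm, ho⟩
          · intro u hu hun _
            omega
        · have hn : n ≤ S.card := by omega
          obtain ⟨hm, ho⟩ := hf1 n hn1 le_rfl hn
          obtain ⟨h, ⟨hm', ho'⟩, hss⟩ := exchange S c hcard hm ho
          refine ⟨fun u => if u = n+1 then h else f u, ?_, ?_⟩
          · intro u hu hun hus
            by_cases hue : u = n + 1
            · subst hue
              simp only [if_pos rfl]
              exact ⟨hm', ho'⟩
            · simp only [if_neg hue]
              exact hf1 u hu (by omega) hus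
          · intro u hu hun hus
            by_cases hue : u = n
            · subst hue
              have e1 : (fun v => if v = u + 1 then h else f v) u = f u :=
                if_neg (by omega)
              have e2 : (fun v => if v = u + 1 then h else f v) (u+1) = h := if_pos rfl
              rw [e1, e2]
              exact hss
            · have e1 : (fun v => if v = n + 1 then h else f v) u = f u :=
                if_neg (by omega)
              have e2 : (fun v => if v = n + 1 then h else f v) (u+1) = f (u+1) :=
                if_neg (by omega)
              rw [e1, e2]
              exact hf2 u hu (by omega) hus
      · refine ⟨f, ?_, ?_⟩
        · intro u hu hun hus
          exact hf1 u hu (by omega) hus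
        · intro u hu hun hus
          exact hf2 u hu (by omega) hus
  obtain ⟨f, h1, h2⟩ := key S.card
  exact ⟨f, fun t ht1 ht2 => h1 t ht1 ht2 ht2, fun t ht1 ht2 => h2 t ht1 ht2 ht2⟩

end Aux

/-- For a metric space `(X,d)`, a finite server set `S` with `|S| = k`, and clients
`c 1, …, c k`, there is a sequence of optimal matchings `f 1, …, f k` (where `f t` optimally
matches the first `t` clients into `S`) whose images (sets of used servers) are nested. -/
theorem stmt4 {X : Type*} [MetricSpace X] (S : Finset X) (c : ℕ → X) :
    ∃ f : ℕ → (ℕ → X),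
      (∀ t, 1 ≤ t → t ≤ S.card →
        IsMatching S t (f t) ∧ matchingCost t c (f t) = OPT S t c) ∧
      (∀ t, 1 ≤ t → t < S.card →
        f t '' Set.Icc 1 t ⊆ f (t + 1) '' Set.Icc 1 (t + 1)) := by
  exact stmt4' S c
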